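/- Under the shared clustering-perturbation setup, suppose additionally that there is ε₂ > 0 such that for every k ∈ [K] and every i ∈ D_k, [ Σ_{j∉D_k} A_{ij}/d_i^{(k)} ] · [ Σ_{i₁,j₁∈D_k} A_{i₁j₁}²/(d_{i₁}^{(k)}·d_{j₁}^{(k)}) ]^{1/2} ≤ ε₂. Then for every k ∈ [K] and every i ∈ D_k, [ Σ_{j∉D_k} Â_{ij}/d̂_i^{(k)} ] · [ Σ_{i₁,j₁∈D_k} Â_{i₁j₁}²/(d̂_{i₁}^{(k)}·d̂_{j₁}^{(k)}) ]^{1/2} ≤ ε₂ + A₇·ε, where A₇ = 80Mc/m⁷. -/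

import Mathlib

lemma gauss_deriv (σ : ℝ) (t : ℝ) :
    HasDerivAt (fun x : ℝ => Real.exp (-x ^ 2 / (2 * σ ^ 2)))
      ((-t / σ ^ 2) * Real.exp (-t ^ 2 / (2 * σ ^ 2))) t := by
  have h : HasDerivAt (fun x : ℝ => -x ^ 2 / (2 * σ ^ 2)) (-t / σ ^ 2) t := by
    have h1 : HasDerivAt (fun x : ℝ => -x ^ 2) (-(2 * t)) t := by
      exact ((hasDerivAt_pow 2 t).neg).congr_deriv (by norm_num)
    have := h1.div_const (2 * σ ^ 2)
    exact this.congr_deriv (by rw [← mul_neg, mul_div_mul_left _ _ (two_ne_zero)])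
  simpa [mul_comm] using h.exp

lemma gauss_lip (σ : ℝ) (hσ : 0 < σ) (x y : ℝ) :
    |Real.exp (-x ^ 2 / (2 * σ ^ 2)) - Real.exp (-y ^ 2 / (2 * σ ^ 2))|
      ≤ (1 / (σ * Real.sqrt (Real.exp 1))) * |x - y| := by
  have key : ∀ t : ℝ, ‖(-t / σ ^ 2) * Real.exp (-t ^ 2 / (2 * σ ^ 2))‖
      ≤ 1 / (σ * Real.sqrt (Real.exp 1)) := by
    intro t
    have hsq : Real.sqrt (Real.exp 1) = Real.exp (2⁻¹ : ℝ) := by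
      rw [← Real.exp_half]; norm_num
    set u : ℝ := |t| / σ with hu
    have hu0 : 0 ≤ u := div_nonneg (abs_nonneg t) hσ.le
    have hkey : u ≤ Real.exp ((u ^ 2 - 1) / 2) := by
      have h1 : (u ^ 2 + 1) / 2 ≤ Real.exp ((u ^ 2 - 1) / 2) := by
        have := Real.add_one_le_exp ((u ^ 2 - 1) / 2)
        linarith
      nlinarith [sq_nonneg (u - 1)]
    have hmain : u * Real.exp (-(u ^ 2) / 2) ≤ Real.exp (-(1 / 2) : ℝ) := by
      have h2 : u * Real.exp (-(u ^ 2) / 2) ≤ Real.exp ((u ^ 2 - 1) / 2) * Real.exp (-(u ^ 2) / 2) := by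
        apply mul_le_mul_of_nonneg_right hkey (Real.exp_pos _).le
      rw [← Real.exp_add] at h2
      convert h2 using 2
      ring
    have hu2 : u ^ 2 = t ^ 2 / σ ^ 2 := by rw [hu, div_pow, sq_abs]
    have harg : -t ^ 2 / (2 * σ ^ 2) = -(u ^ 2) / 2 := by
      rw [hu2]; ring
    have hnorm : ‖(-t / σ ^ 2) * Real.exp (-t ^ 2 / (2 * σ ^ 2))‖
        = (1 / σ) * (u * Real.exp (-(u ^ 2) / 2)) := by
      rw [Real.norm_eq_abs, abs_mul, Real.abs_exp, harg, abs_div, abs_neg,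
        abs_of_pos (show (0:ℝ) < σ ^ 2 by positivity), hu, sq]
      field_simp
    rw [hnorm, hsq]
    have : 1 / (σ * Real.exp (2⁻¹ : ℝ)) = (1 / σ) * Real.exp (-(1/2) : ℝ) := by
      rw [Real.exp_neg]
      field_simp
    rw [this]
    exact mul_le_mul_of_nonneg_left hmain (by positivity)
  have := Convex.norm_image_sub_le_of_norm_hasDerivWithin_le
    (f := fun x : ℝ => Real.exp (-x ^ 2 / (2 * σ ^ 2)))
    (f' := fun t => (-t / σ ^ 2) * Real.exp (-t ^ 2 / (2 * σ ^ 2)))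
    (s := Set.univ) (fun t _ => (gauss_deriv σ t).hasDerivWithinAt)
    (fun t _ => key t) convex_univ (Set.mem_univ y) (Set.mem_univ x)
  simpa [Real.norm_eq_abs, abs_sub_comm] using this

/-- bound a double sum termwise -/
lemma double_sum_le {α : Type*} [DecidableEq α] (s : Finset α) (f : α → α → ℝ) (b : ℝ)
    (h : ∀ i ∈ s, ∀ j ∈ s, f i j ≤ b) :
    ∑ i ∈ s, ∑ j ∈ s, f i j ≤ (s.card : ℝ) * ((s.card : ℝ) * b) := by
  calc ∑ i ∈ s, ∑ j ∈ s, f i j ≤ ∑ _i ∈ s, (s.card : ℝ) * b := by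
        apply Finset.sum_le_sum
        intro i hi
        have := Finset.sum_le_card_nsmul s (f i) b (h i hi)
        rwa [nsmul_eq_mul] at this
    _ = (s.card : ℝ) * ((s.card : ℝ) * b) := by
        rw [Finset.sum_const, nsmul_eq_mul]

set_option maxHeartbeats 2000000 in
/-- SHARED SETUP + STATEMENT. -/
theorem offcluster_product_perturbation_bound
    (M K : ℕ) (hM : 2 ≤ M) (hK : 1 ≤ K)
    -- the clusters: a partition of [M] into K clusters, each of size ≥ 2
    (D : Fin K → Finset (Fin M))
    (hDdisj : ∀ k l : Fin K, k ≠ l → Disjoint (D k) (D l))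
    (hDcover : ∀ i : Fin M, ∃ k : Fin K, i ∈ D k)
    (hDcard : ∀ k : Fin K, 2 ≤ (D k).card)
    -- true and estimated distances: nonnegative, symmetric, zero diagonal
    (d dh : Fin M → Fin M → ℝ)
    (hd0 : ∀ i j, 0 ≤ d i j) (hdh0 : ∀ i j, 0 ≤ dh i j)
    (hdsymm : ∀ i j, d i j = d j i) (hdhsymm : ∀ i j, dh i j = dh j i)
    (hddiag : ∀ i, d i i = 0) (hdhdiag : ∀ i, dh i i = 0)
    -- affinity matrices
    (σa : ℝ) (hσa : 0 < σa)
    (A Ah : Fin M → Fin M → ℝ)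
    (hA : ∀ i j, A i j = if i = j then 0 else Real.exp (-(d i j) ^ 2 / (2 * σa ^ 2)))
    (hAh : ∀ i j, Ah i j = if i = j then 0 else Real.exp (-(dh i j) ^ 2 / (2 * σa ^ 2)))
    -- cluster degrees
    (deg degh : Fin K → Fin M → ℝ)
    (hdeg : ∀ k i, deg k i = ∑ j ∈ D k, A i j)
    (hdegh : ∀ k i, degh k i = ∑ j ∈ D k, Ah i j)
    -- m = min intra-cluster true affinity, c = Lipschitz constant of the kernel
    (m c : ℝ)
    (hc : c = 1 / (σa * Real.sqrt (Real.exp 1)))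
    (hm_le : ∀ k : Fin K, ∀ i ∈ D k, ∀ j ∈ D k, i ≠ j → m ≤ A i j)
    (hm_attained : ∃ k : Fin K, ∃ i ∈ D k, ∃ j ∈ D k, i ≠ j ∧ m = A i j)
    -- the estimation error event
    (ε : ℝ) (hε : 0 < ε) (hεlt : ε < m / (2 * c))
    (hclose : ∀ i j : Fin M, i ≠ j → |dh i j - d i j| < ε)
    -- Assumption 3 for the true quantities
    (ε₂ : ℝ) (hε₂ : 0 < ε₂)
    (hassump : ∀ k : Fin K, ∀ i ∈ D k,
      (∑ j ∈ Finset.univ \ D k, A i j / deg k i)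
        * Real.sqrt (∑ i₁ ∈ D k, ∑ j₁ ∈ D k,
            (A i₁ j₁) ^ 2 / (deg k i₁ * deg k j₁)) ≤ ε₂) :
    ∀ k : Fin K, ∀ i ∈ D k,
      (∑ j ∈ Finset.univ \ D k, Ah i j / degh k i)
        * Real.sqrt (∑ i₁ ∈ D k, ∑ j₁ ∈ D k,
            (Ah i₁ j₁) ^ 2 / (degh k i₁ * degh k j₁))
        ≤ ε₂ + (80 * (M : ℝ) * c / m ^ 7) * ε := by
  -- global facts
  have hsqe : 0 < Real.sqrt (Real.exp 1) := Real.sqrt_pos.mpr (Real.exp_pos 1)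
  have hc0 : 0 < c := by rw [hc]; positivity
  have hA0 : ∀ i j, 0 ≤ A i j := by
    intro i j; rw [hA]; split_ifs
    · exact le_rfl
    · positivity
  have hA1 : ∀ i j, A i j ≤ 1 := by
    intro i j; rw [hA]; split_ifs
    · norm_num
    · have h1 : (-(d i j) ^ 2) ≤ 0 := neg_nonpos.mpr (sq_nonneg _)
      have h2 : (0:ℝ) ≤ 2 * σa ^ 2 := by positivity
      exact Real.exp_le_one_iff.mpr (div_nonpos_of_nonpos_of_nonneg h1 h2)
  have hAh0 : ∀ i j, 0 ≤ Ah i j := by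
    intro i j; rw [hAh]; split_ifs
    · exact le_rfl
    · positivity
  have hAh1 : ∀ i j, Ah i j ≤ 1 := by
    intro i j; rw [hAh]; split_ifs
    · norm_num
    · have h1 : (-(dh i j) ^ 2) ≤ 0 := neg_nonpos.mpr (sq_nonneg _)
      have h2 : (0:ℝ) ≤ 2 * σa ^ 2 := by positivity
      exact Real.exp_le_one_iff.mpr (div_nonpos_of_nonpos_of_nonneg h1 h2)
  have hm0 : 0 < m := by
    obtain ⟨k₀, i₀, hi₀, j₀, hj₀, hne, hmA⟩ := hm_attained
    rw [hmA, hA, if_neg hne]; positivity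
  have hm1 : m ≤ 1 := by
    obtain ⟨k₀, i₀, hi₀, j₀, hj₀, hne, hmA⟩ := hm_attained
    rw [hmA]; exact hA1 _ _
  have hB0 : 0 < c * ε := by positivity
  have hBm : c * ε < m / 2 := by
    have := mul_lt_mul_of_pos_left hεlt hc0
    have h2 : c * (m / (2 * c)) = m / 2 := by field_simp
    linarith [h2 ▸ this]
  have hAdiff : ∀ i j, |Ah i j - A i j| ≤ c * ε := by
    intro i j
    by_cases hij : i = j
    · rw [hA, hAh, if_pos hij, if_pos hij]; simpa using hB0.le
    · rw [hA, hAh, if_neg hij, if_neg hij]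
      calc |Real.exp (-(dh i j) ^ 2 / (2 * σa ^ 2)) - Real.exp (-(d i j) ^ 2 / (2 * σa ^ 2))|
          ≤ (1 / (σa * Real.sqrt (Real.exp 1))) * |dh i j - d i j| := gauss_lip σa hσa _ _
        _ ≤ c * ε := by
            rw [hc]
            exact mul_le_mul_of_nonneg_left (hclose i j hij).le (by positivity)
  intro k i hik
  have hcard := hDcard k
  set ν : ℝ := ((D k).card : ℝ) - 1 with hνdef
  have hcardν : ((D k).card : ℝ) = ν + 1 := by rw [hνdef]; ring
  have hν1 : 1 ≤ ν := by
    have h2 : (2:ℝ) ≤ ((D k).card : ℝ) := by exact_mod_cast hcard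
    rw [hνdef]; linarith
  have hν0 : 0 < ν := lt_of_lt_of_le zero_lt_one hν1
  have hcardsd : ∀ j ∈ D k, (((D k \ {j}).card : ℝ)) = ν := by
    intro j hj
    rw [Finset.card_sdiff_of_subset (Finset.singleton_subset_iff.mpr hj), Finset.card_singleton,
      Nat.cast_sub (by omega : 1 ≤ (D k).card)]
    rw [hνdef]; norm_num
  have hcer : ∀ j ∈ D k, (((D k).erase j).card : ℝ) = ν := by
    intro j hj
    rw [Finset.card_erase_of_mem hj, Nat.cast_sub (by omega : 1 ≤ (D k).card), hνdef]
    norm_num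
  -- degree bounds
  have hdeg_ub : ∀ j ∈ D k, deg k j ≤ ν := by
    intro j hj
    rw [hdeg, ← Finset.sum_erase_add (D k) _ hj]
    have hjj : A j j = 0 := by rw [hA, if_pos rfl]
    have hb := Finset.sum_le_card_nsmul ((D k).erase j) (A j) 1 (fun l _ => hA1 j l)
    rw [nsmul_eq_mul, mul_one, hcer j hj] at hb
    rw [hjj]
    linarith
  have hdeg_lb : ∀ j ∈ D k, ν * m ≤ deg k j := by
    intro j hj
    rw [hdeg]
    have h1 := Finset.sum_le_sum_of_subset_of_nonneg (Finset.erase_subset j (D k))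
      (fun l _ _ => hA0 j l)
    have h2 := Finset.card_nsmul_le_sum ((D k).erase j) (A j) m
      (fun l hl => hm_le k j hj l (Finset.mem_of_mem_erase hl)
        (Ne.symm (Finset.mem_erase.mp hl).1))
    rw [nsmul_eq_mul, hcer j hj] at h2
    linarith
  have hAhm : ∀ j ∈ D k, ∀ l ∈ D k, j ≠ l → m / 2 ≤ Ah j l := by
    intro j hj l hl hne
    have h1 := abs_le.mp (hAdiff j l)
    have h2 := hm_le k j hj l hl hne
    linarith [h1.1]
  have hdegh_ub : ∀ j ∈ D k, degh k j ≤ ν := by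
    intro j hj
    rw [hdegh, ← Finset.sum_erase_add (D k) _ hj]
    have hjj : Ah j j = 0 := by rw [hAh, if_pos rfl]
    have hb := Finset.sum_le_card_nsmul ((D k).erase j) (Ah j) 1 (fun l _ => hAh1 j l)
    rw [nsmul_eq_mul, mul_one, hcer j hj] at hb
    rw [hjj]
    linarith
  have hdegh_lb : ∀ j ∈ D k, ν * (m / 2) ≤ degh k j := by
    intro j hj
    rw [hdegh]
    have h1 := Finset.sum_le_sum_of_subset_of_nonneg (Finset.erase_subset j (D k))
      (fun l _ _ => hAh0 j l)
    have h2 := Finset.card_nsmul_le_sum ((D k).erase j) (Ah j) (m / 2)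
      (fun l hl => hAhm j hj l (Finset.mem_of_mem_erase hl)
        (Ne.symm (Finset.mem_erase.mp hl).1))
    rw [nsmul_eq_mul, hcer j hj] at h2
    linarith
  have hdeg_pos : ∀ j ∈ D k, 0 < deg k j :=
    fun j hj => lt_of_lt_of_le (by positivity) (hdeg_lb j hj)
  have hdegh_pos : ∀ j ∈ D k, 0 < degh k j :=
    fun j hj => lt_of_lt_of_le (by positivity) (hdegh_lb j hj)
  have hdegdiff : ∀ j : Fin M, |degh k j - deg k j| ≤ 2 * ν * (c * ε) := by
    intro j
    rw [hdeg, hdegh, ← Finset.sum_sub_distrib]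
    calc |∑ l ∈ D k, (Ah j l - A j l)| ≤ ∑ l ∈ D k, |Ah j l - A j l| :=
          Finset.abs_sum_le_sum_abs _ _
      _ ≤ (D k).card • (c * ε) :=
          Finset.sum_le_card_nsmul _ _ _ (fun l _ => hAdiff j l)
      _ ≤ 2 * ν * (c * ε) := by
          rw [nsmul_eq_mul, hcardν]
          nlinarith
  -- notation for the four quantities
  set S : ℝ := ∑ j ∈ Finset.univ \ D k, A i j / deg k i with hS
  set Sh : ℝ := ∑ j ∈ Finset.univ \ D k, Ah i j / degh k i with hSh
  set T : ℝ := ∑ i₁ ∈ D k, ∑ j₁ ∈ D k, (A i₁ j₁) ^ 2 / (deg k i₁ * deg k j₁) with hT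
  set Th : ℝ := ∑ i₁ ∈ D k, ∑ j₁ ∈ D k, (Ah i₁ j₁) ^ 2 / (degh k i₁ * degh k j₁) with hTh
  have hMcast : ((Finset.univ \ D k).card : ℝ) ≤ (M : ℝ) := by
    have h1 : (Finset.univ \ D k).card ≤ (Finset.univ : Finset (Fin M)).card :=
      Finset.card_le_card (Finset.subset_univ _)
    have h2 : (Finset.univ : Finset (Fin M)).card = M := by simp
    exact_mod_cast h2 ▸ h1
  have hνm0 : 0 < ν * m := by positivity
  have hS0 : 0 ≤ S := Finset.sum_nonneg (fun j _ => div_nonneg (hA0 _ _) (hdeg_pos i hik).le)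
  have hS_ub : S ≤ (M : ℝ) / m := by
    calc S ≤ (Finset.univ \ D k).card • (1 / (ν * m)) :=
          Finset.sum_le_card_nsmul _ _ _
            (fun j _ => div_le_div₀ zero_le_one (hA1 i j) hνm0 (hdeg_lb i hik))
      _ = ((Finset.univ \ D k).card : ℝ) * (1 / (ν * m)) := by rw [nsmul_eq_mul]
      _ ≤ (M : ℝ) * (1 / (ν * m)) := mul_le_mul_of_nonneg_right hMcast (by positivity)
      _ = (M : ℝ) / (ν * m) := by rw [mul_one_div]
      _ ≤ (M : ℝ) / m := div_le_div_of_nonneg_left (by positivity) (by positivity)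
          (by nlinarith)
  have hS_diff : Sh ≤ S + (M : ℝ) * (6 * (c * ε) / m ^ 2) := by
    have per : ∀ j ∈ Finset.univ \ D k,
        Ah i j / degh k i - A i j / deg k i ≤ 6 * (c * ε) / (ν * m ^ 2) := by
      intro j _
      have hdI := hdeg_pos i hik
      have hdhI := hdegh_pos i hik
      have key : Ah i j / degh k i - A i j / deg k i
          = (Ah i j - A i j) / degh k i
            + A i j * (deg k i - degh k i) / (deg k i * degh k i) := by
        field_simp
        ring
      have t1 : (Ah i j - A i j) / degh k i ≤ (c * ε) / (ν * (m / 2)) :=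
        div_le_div₀ hB0.le ((le_abs_self _).trans (hAdiff i j)) (by positivity)
          (hdegh_lb i hik)
      have t2 : A i j * (deg k i - degh k i) / (deg k i * degh k i)
          ≤ (2 * ν * (c * ε)) / ((ν * m) * (ν * (m / 2))) := by
        apply div_le_div₀ (by positivity) ?_ (by positivity) ?_
        · calc A i j * (deg k i - degh k i) ≤ A i j * |deg k i - degh k i| :=
                mul_le_mul_of_nonneg_left (le_abs_self _) (hA0 i j)
            _ ≤ 1 * |deg k i - degh k i| :=
                mul_le_mul_of_nonneg_right (hA1 i j) (abs_nonneg _)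
            _ ≤ 2 * ν * (c * ε) := by
                rw [one_mul, abs_sub_comm]
                exact hdegdiff i
        · exact mul_le_mul (hdeg_lb i hik) (hdegh_lb i hik) (by positivity) hdI.le
      have e1 : (c * ε) / (ν * (m / 2)) = 2 * (c * ε) / (ν * m) := by
        field_simp
      have e2 : (2 * ν * (c * ε)) / ((ν * m) * (ν * (m / 2))) = 4 * (c * ε) / (ν * m ^ 2) := by
        field_simp
        ring
      have e3 : 2 * (c * ε) / (ν * m) ≤ 2 * (c * ε) / (ν * m ^ 2) :=
        div_le_div_of_nonneg_left (by positivity) (by positivity) (by nlinarith)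
      rw [key]
      rw [e1] at t1
      rw [e2] at t2
      have h4 : 4 * (c * ε) / (ν * m ^ 2) = 2 * (2 * (c * ε) / (ν * m ^ 2)) := by ring
      have h6 : 6 * (c * ε) / (ν * m ^ 2) = 3 * (2 * (c * ε) / (ν * m ^ 2)) := by ring
      rw [h4] at t2
      rw [h6]
      linarith
    have hsum : Sh - S ≤ ((Finset.univ \ D k).card : ℝ) * (6 * (c * ε) / (ν * m ^ 2)) := by
      rw [hSh, hS, ← Finset.sum_sub_distrib]
      have := Finset.sum_le_card_nsmul (Finset.univ \ D k)
        (fun j => Ah i j / degh k i - A i j / deg k i) _ per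
      rwa [nsmul_eq_mul] at this
    have h2 : ((Finset.univ \ D k).card : ℝ) * (6 * (c * ε) / (ν * m ^ 2))
        ≤ (M : ℝ) * (6 * (c * ε) / m ^ 2) := by
      have hb : 6 * (c * ε) / (ν * m ^ 2) ≤ 6 * (c * ε) / m ^ 2 :=
        div_le_div_of_nonneg_left (by positivity) (by positivity) (by nlinarith)
      have h0 : (0:ℝ) ≤ 6 * (c * ε) / (ν * m ^ 2) := by positivity
      calc ((Finset.univ \ D k).card : ℝ) * (6 * (c * ε) / (ν * m ^ 2))
          ≤ (M : ℝ) * (6 * (c * ε) / (ν * m ^ 2)) := mul_le_mul_of_nonneg_right hMcast h0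
        _ ≤ (M : ℝ) * (6 * (c * ε) / m ^ 2) :=
            mul_le_mul_of_nonneg_left hb (by positivity)
    linarith
  -- lower bound on T
  have hT_lb : m ^ 2 ≤ T := by
    have inner : ∀ i₁ ∈ D k,
        m ^ 2 / ν ≤ ∑ j₁ ∈ D k, (A i₁ j₁) ^ 2 / (deg k i₁ * deg k j₁) := by
      intro i₁ hi₁
      have h1 : ∑ j₁ ∈ (D k).erase i₁, (A i₁ j₁) ^ 2 / (deg k i₁ * deg k j₁)
          ≤ ∑ j₁ ∈ D k, (A i₁ j₁) ^ 2 / (deg k i₁ * deg k j₁) :=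
        Finset.sum_le_sum_of_subset_of_nonneg (Finset.erase_subset _ _)
          (fun l hl _ => div_nonneg (by positivity)
            (mul_nonneg (hdeg_pos i₁ hi₁).le (hdeg_pos l hl).le))
      have h2 := Finset.card_nsmul_le_sum ((D k).erase i₁)
        (fun j₁ => (A i₁ j₁) ^ 2 / (deg k i₁ * deg k j₁)) (m ^ 2 / (ν * ν))
        (fun j₁ hj₁ => by
          have hj₁' : j₁ ∈ D k := Finset.mem_of_mem_erase hj₁
          have hne : i₁ ≠ j₁ := Ne.symm (Finset.mem_erase.mp hj₁).1
          exact div_le_div₀ (by positivity)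
            (pow_le_pow_left₀ hm0.le (hm_le k i₁ hi₁ j₁ hj₁' hne) 2)
            (mul_pos (hdeg_pos i₁ hi₁) (hdeg_pos j₁ hj₁'))
            (mul_le_mul (hdeg_ub i₁ hi₁) (hdeg_ub j₁ hj₁') (hdeg_pos j₁ hj₁').le hν0.le))
      rw [nsmul_eq_mul, hcer i₁ hi₁] at h2
      have e : ν * (m ^ 2 / (ν * ν)) = m ^ 2 / ν := by
        field_simp
      linarith [e ▸ h2]
    have h3 := Finset.card_nsmul_le_sum (D k)
      (fun i₁ => ∑ j₁ ∈ D k, (A i₁ j₁) ^ 2 / (deg k i₁ * deg k j₁)) (m ^ 2 / ν) inner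
    rw [nsmul_eq_mul, hcardν] at h3
    have e2 : (ν + 1) * (m ^ 2 / ν) = m ^ 2 + m ^ 2 / ν := by
      field_simp
    have h4 : (0:ℝ) ≤ m ^ 2 / ν := by positivity
    rw [hT]
    linarith [e2 ▸ h3]
  have hT0 : 0 ≤ T := le_trans (sq_nonneg m) hT_lb
  have hsqrtT : m ≤ Real.sqrt T := (Real.le_sqrt hm0.le hT0).mpr hT_lb
  -- upper bound on sqrt Th
  have hTh_ub : Th ≤ (4 / m) ^ 2 := by
    have per : ∀ i₁ ∈ D k, ∀ j₁ ∈ D k,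
        (Ah i₁ j₁) ^ 2 / (degh k i₁ * degh k j₁)
          ≤ 1 / ((ν * (m / 2)) * (ν * (m / 2))) := by
      intro i₁ hi₁ j₁ hj₁
      exact div_le_div₀ zero_le_one
        (by nlinarith [hAh0 i₁ j₁, hAh1 i₁ j₁])
        (by positivity)
        (mul_le_mul (hdegh_lb i₁ hi₁) (hdegh_lb j₁ hj₁) (by positivity) (hdegh_pos i₁ hi₁).le)
    have h1 := double_sum_le (D k) _ _ per
    rw [hcardν] at h1
    have e : (ν + 1) * ((ν + 1) * (1 / ((ν * (m / 2)) * (ν * (m / 2)))))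
        = 4 * (ν + 1) ^ 2 / (ν ^ 2 * m ^ 2) := by
      field_simp
      ring
    have h2 : 4 * (ν + 1) ^ 2 / (ν ^ 2 * m ^ 2) ≤ (4 / m) ^ 2 := by
      rw [div_pow, div_le_div_iff₀ (by positivity) (by positivity)]
      nlinarith [mul_nonneg (mul_nonneg (by linarith : (0:ℝ) ≤ 3 * ν + 1)
        (by linarith : (0:ℝ) ≤ ν - 1)) (sq_nonneg m)]
    rw [hTh]
    calc ∑ i₁ ∈ D k, ∑ j₁ ∈ D k, (Ah i₁ j₁) ^ 2 / (degh k i₁ * degh k j₁)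
        ≤ (ν + 1) * ((ν + 1) * (1 / ((ν * (m / 2)) * (ν * (m / 2))))) := h1
      _ ≤ (4 / m) ^ 2 := by rw [e]; exact h2
  have hsqTh : Real.sqrt Th ≤ 4 / m := by
    have := Real.sqrt_le_sqrt hTh_ub
    rwa [Real.sqrt_sq (by positivity)] at this
  -- Th close to T
  have hT_diff : Th ≤ T + 96 * (c * ε) / m ^ 4 := by
    have per : ∀ i₁ ∈ D k, ∀ j₁ ∈ D k,
        (Ah i₁ j₁) ^ 2 / (degh k i₁ * degh k j₁) - (A i₁ j₁) ^ 2 / (deg k i₁ * deg k j₁)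
          ≤ 24 * (c * ε) / (ν ^ 2 * m ^ 4) := by
      intro i₁ hi₁ j₁ hj₁
      have hx := hdeg_pos i₁ hi₁
      have hy := hdeg_pos j₁ hj₁
      have hxh := hdegh_pos i₁ hi₁
      have hyh := hdegh_pos j₁ hj₁
      have key : (Ah i₁ j₁) ^ 2 / (degh k i₁ * degh k j₁) - (A i₁ j₁) ^ 2 / (deg k i₁ * deg k j₁)
          = ((Ah i₁ j₁) ^ 2 - (A i₁ j₁) ^ 2) / (degh k i₁ * degh k j₁)
            + (A i₁ j₁) ^ 2 * (deg k i₁ * deg k j₁ - degh k i₁ * degh k j₁)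
              / ((deg k i₁ * deg k j₁) * (degh k i₁ * degh k j₁)) := by
        field_simp
        ring
      have num1 : (Ah i₁ j₁) ^ 2 - (A i₁ j₁) ^ 2 ≤ 2 * (c * ε) := by
        have habs : |Ah i₁ j₁ + A i₁ j₁| ≤ 2 :=
          abs_le.mpr ⟨by linarith [hAh0 i₁ j₁, hA0 i₁ j₁],
            by linarith [hAh1 i₁ j₁, hA1 i₁ j₁]⟩
        calc (Ah i₁ j₁) ^ 2 - (A i₁ j₁) ^ 2
            = (Ah i₁ j₁ - A i₁ j₁) * (Ah i₁ j₁ + A i₁ j₁) := by ring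
          _ ≤ |(Ah i₁ j₁ - A i₁ j₁) * (Ah i₁ j₁ + A i₁ j₁)| := le_abs_self _
          _ = |Ah i₁ j₁ - A i₁ j₁| * |Ah i₁ j₁ + A i₁ j₁| := abs_mul _ _
          _ ≤ (c * ε) * 2 := mul_le_mul (hAdiff i₁ j₁) habs (abs_nonneg _) hB0.le
          _ = 2 * (c * ε) := by ring
      have t1 : ((Ah i₁ j₁) ^ 2 - (A i₁ j₁) ^ 2) / (degh k i₁ * degh k j₁)
          ≤ (2 * (c * ε)) / ((ν * (m / 2)) * (ν * (m / 2))) :=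
        div_le_div₀ (by positivity) num1 (by positivity)
          (mul_le_mul (hdegh_lb i₁ hi₁) (hdegh_lb j₁ hj₁) (by positivity) hxh.le)
      have num2 : (A i₁ j₁) ^ 2 * (deg k i₁ * deg k j₁ - degh k i₁ * degh k j₁)
          ≤ 4 * ν ^ 2 * (c * ε) := by
        have habs : |deg k i₁ * deg k j₁ - degh k i₁ * degh k j₁| ≤ 4 * ν ^ 2 * (c * ε) := by
          have e : deg k i₁ * deg k j₁ - degh k i₁ * degh k j₁
              = deg k i₁ * (deg k j₁ - degh k j₁) + degh k j₁ * (deg k i₁ - degh k i₁) := by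
            ring
          calc |deg k i₁ * deg k j₁ - degh k i₁ * degh k j₁|
              ≤ |deg k i₁ * (deg k j₁ - degh k j₁)| + |degh k j₁ * (deg k i₁ - degh k i₁)| := by
                rw [e]; exact abs_add_le _ _
            _ = |deg k i₁| * |deg k j₁ - degh k j₁| + |degh k j₁| * |deg k i₁ - degh k i₁| := by
                rw [abs_mul, abs_mul]
            _ ≤ ν * (2 * ν * (c * ε)) + ν * (2 * ν * (c * ε)) := by
                apply add_le_add
                · exact mul_le_mul (by rw [abs_of_pos hx]; exact hdeg_ub i₁ hi₁)
                    (by rw [abs_sub_comm]; exact hdegdiff j₁) (abs_nonneg _) hν0.le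
                · exact mul_le_mul (by rw [abs_of_pos hyh]; exact hdegh_ub j₁ hj₁)
                    (by rw [abs_sub_comm]; exact hdegdiff i₁) (abs_nonneg _) hν0.le
            _ = 4 * ν ^ 2 * (c * ε) := by ring
        calc (A i₁ j₁) ^ 2 * (deg k i₁ * deg k j₁ - degh k i₁ * degh k j₁)
            ≤ (A i₁ j₁) ^ 2 * |deg k i₁ * deg k j₁ - degh k i₁ * degh k j₁| :=
              mul_le_mul_of_nonneg_left (le_abs_self _) (by positivity)
          _ ≤ 1 * |deg k i₁ * deg k j₁ - degh k i₁ * degh k j₁| :=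
              mul_le_mul_of_nonneg_right
                (by nlinarith [hA0 i₁ j₁, hA1 i₁ j₁]) (abs_nonneg _)
          _ ≤ 4 * ν ^ 2 * (c * ε) := by rw [one_mul]; exact habs
      have t2 : (A i₁ j₁) ^ 2 * (deg k i₁ * deg k j₁ - degh k i₁ * degh k j₁)
            / ((deg k i₁ * deg k j₁) * (degh k i₁ * degh k j₁))
          ≤ (4 * ν ^ 2 * (c * ε)) / (((ν * m) * (ν * m)) * ((ν * (m / 2)) * (ν * (m / 2)))) := by
        apply div_le_div₀ (by positivity) num2 (by positivity)
        exact mul_le_mul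
          (mul_le_mul (hdeg_lb i₁ hi₁) (hdeg_lb j₁ hj₁) (by positivity) hx.le)
          (mul_le_mul (hdegh_lb i₁ hi₁) (hdegh_lb j₁ hj₁) (by positivity) hxh.le)
          (by positivity) (by positivity)
      have e1 : (2 * (c * ε)) / ((ν * (m / 2)) * (ν * (m / 2)))
          = 8 * (c * ε) / (ν ^ 2 * m ^ 2) := by
        field_simp
        ring
      have e2 : (4 * ν ^ 2 * (c * ε)) / (((ν * m) * (ν * m)) * ((ν * (m / 2)) * (ν * (m / 2))))
          = 16 * (c * ε) / (ν ^ 2 * m ^ 4) := by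
        field_simp
        ring
      have e3 : 8 * (c * ε) / (ν ^ 2 * m ^ 2) ≤ 8 * (c * ε) / (ν ^ 2 * m ^ 4) := by
        apply div_le_div_of_nonneg_left (by positivity) (by positivity)
        nlinarith [mul_nonneg (sq_nonneg (ν * m)) (by nlinarith : (0:ℝ) ≤ 1 - m ^ 2)]
      rw [key]
      rw [e1] at t1
      rw [e2] at t2
      have h4 : 16 * (c * ε) / (ν ^ 2 * m ^ 4) = 2 * (8 * (c * ε) / (ν ^ 2 * m ^ 4)) := by ring
      have h6 : 24 * (c * ε) / (ν ^ 2 * m ^ 4) = 3 * (8 * (c * ε) / (ν ^ 2 * m ^ 4)) := by ring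
      rw [h4] at t2
      rw [h6]
      linarith
    have hsub : Th - T = ∑ i₁ ∈ D k, ∑ j₁ ∈ D k,
        ((Ah i₁ j₁) ^ 2 / (degh k i₁ * degh k j₁) - (A i₁ j₁) ^ 2 / (deg k i₁ * deg k j₁)) := by
      rw [hTh, hT, ← Finset.sum_sub_distrib]
      exact Finset.sum_congr rfl (fun i₁ _ => by rw [← Finset.sum_sub_distrib])
    have h1 := double_sum_le (D k) _ _ per
    rw [hcardν] at h1
    have e : (ν + 1) * ((ν + 1) * (24 * (c * ε) / (ν ^ 2 * m ^ 4)))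
        = 24 * (ν + 1) ^ 2 * (c * ε) / (ν ^ 2 * m ^ 4) := by
      field_simp
    have h2 : 24 * (ν + 1) ^ 2 * (c * ε) / (ν ^ 2 * m ^ 4) ≤ 96 * (c * ε) / m ^ 4 := by
      rw [div_le_div_iff₀ (by positivity) (by positivity)]
      nlinarith [mul_nonneg (mul_nonneg (mul_nonneg
        (by linarith : (0:ℝ) ≤ 3 * ν + 1) (by linarith : (0:ℝ) ≤ ν - 1)) hB0.le)
        (by positivity : (0:ℝ) ≤ m ^ 4)]
    have h3 : Th - T ≤ (ν + 1) * ((ν + 1) * (24 * (c * ε) / (ν ^ 2 * m ^ 4))) := by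
      rw [hsub]; exact h1
    have h4 := e ▸ h3
    linarith
  -- sqrt comparison
  have hsq_diff : Real.sqrt Th ≤ Real.sqrt T + 48 * (c * ε) / m ^ 5 := by
    have hδ0 : (0:ℝ) ≤ 48 * (c * ε) / m ^ 5 := by positivity
    have hsq : Real.sqrt T ^ 2 = T := Real.sq_sqrt hT0
    have h2δ : 2 * (48 * (c * ε) / m ^ 5) * m = 96 * (c * ε) / m ^ 4 := by
      field_simp
      ring
    have h1 : Th ≤ (Real.sqrt T + 48 * (c * ε) / m ^ 5) ^ 2 := by
      nlinarith [mul_nonneg hδ0 (sub_nonneg.mpr hsqrtT), hT_diff, hsq, h2δ,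
        sq_nonneg (48 * (c * ε) / m ^ 5)]
    have h2 := Real.sqrt_le_sqrt h1
    rwa [Real.sqrt_sq (by positivity)] at h2
  -- assembly
  have hST : S * Real.sqrt T ≤ ε₂ := by
    have := hassump k i hik
    rwa [← hS, ← hT] at this
  have h7 : (0:ℝ) ≤ Real.sqrt Th := Real.sqrt_nonneg _
  have hfinal : Sh * Real.sqrt Th
      ≤ ε₂ + (M : ℝ) / m * (48 * (c * ε) / m ^ 5) + (M : ℝ) * (6 * (c * ε) / m ^ 2) * (4 / m) := by
    calc Sh * Real.sqrt Th
        ≤ (S + (M : ℝ) * (6 * (c * ε) / m ^ 2)) * Real.sqrt Th :=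
          mul_le_mul_of_nonneg_right hS_diff h7
      _ = S * Real.sqrt Th + (M : ℝ) * (6 * (c * ε) / m ^ 2) * Real.sqrt Th := by ring
      _ ≤ S * (Real.sqrt T + 48 * (c * ε) / m ^ 5)
            + (M : ℝ) * (6 * (c * ε) / m ^ 2) * (4 / m) := by
          apply add_le_add
          · exact mul_le_mul_of_nonneg_left hsq_diff hS0
          · exact mul_le_mul_of_nonneg_left hsqTh (by positivity)
      _ = S * Real.sqrt T + S * (48 * (c * ε) / m ^ 5)
            + (M : ℝ) * (6 * (c * ε) / m ^ 2) * (4 / m) := by ring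
      _ ≤ ε₂ + (M : ℝ) / m * (48 * (c * ε) / m ^ 5)
            + (M : ℝ) * (6 * (c * ε) / m ^ 2) * (4 / m) := by
          apply add_le_add ?_ le_rfl
          apply add_le_add hST
          exact mul_le_mul_of_nonneg_right hS_ub (by positivity)
  have hm76 : m ^ 7 ≤ m ^ 6 := pow_le_pow_of_le_one hm0.le hm1 (by norm_num)
  have hm73 : m ^ 7 ≤ m ^ 3 := pow_le_pow_of_le_one hm0.le hm1 (by norm_num)
  have hMpos : (0:ℝ) ≤ (M : ℝ) := Nat.cast_nonneg M
  have e1 : (M : ℝ) / m * (48 * (c * ε) / m ^ 5) = 48 * (M : ℝ) * (c * ε) / m ^ 6 := by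
    field_simp
  have e2 : (M : ℝ) * (6 * (c * ε) / m ^ 2) * (4 / m) = 24 * (M : ℝ) * (c * ε) / m ^ 3 := by
    field_simp
    ring
  have e3 : (80 * (M : ℝ) * c / m ^ 7) * ε = 80 * (M : ℝ) * (c * ε) / m ^ 7 := by
    field_simp
  have b1 : 48 * (M : ℝ) * (c * ε) / m ^ 6 ≤ 48 * (M : ℝ) * (c * ε) / m ^ 7 :=
    div_le_div_of_nonneg_left (by positivity) (by positivity) hm76
  have b2 : 24 * (M : ℝ) * (c * ε) / m ^ 3 ≤ 24 * (M : ℝ) * (c * ε) / m ^ 7 :=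
    div_le_div_of_nonneg_left (by positivity) (by positivity) hm73
  have b3 : 48 * (M : ℝ) * (c * ε) / m ^ 7 + 24 * (M : ℝ) * (c * ε) / m ^ 7
      ≤ 80 * (M : ℝ) * (c * ε) / m ^ 7 := by
    rw [← add_div]
    apply div_le_div_of_nonneg_right ?_ (by positivity)
    nlinarith
  rw [e1, e2] at hfinal
  rw [e3]
  linarith
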